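/- Let $a$ be an element of a ring $K$ satisfying $l_0 a^m + l_1 a^{m-1} + \cdots + l_{m-1} a = 0$ for some positive integer $m$ and integers $l_0 > 0, l_1, \dots, l_{m-1}$ with $\gcd(l_0, l_1, \dots, l_{m-1}) = 1$, and also satisfying $d \cdot f(a) = 0$ for some monic integer polynomial $f(x)$ without constant term and some integer $d > 1$. Then $\varphi(a) = 0$ for some monic integer polynomial $\varphi(x)$ of degree at most $m$ without constant term. -/

import Mathlib

/-- A (not necessarily unital) ring `K` is finitely separable if every element `a`
lying outside a subring `A` can be separated from `A` by a homomorphism to a finite ring. -/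
def IsFinSep (K : Type) [NonUnitalRing K] : Prop :=
  ∀ (a : K) (A : NonUnitalSubring K), a ∉ A →
    ∃ (F : Type) (_ : NonUnitalRing F) (_ : Finite F),
      ∃ φ : K →ₙ+* F, φ a ∉ ⇑φ '' (A : Set K)

/-- `ppow a n = a ^ (n + 1)`, the positive powers of `a` in a non-unital ring. -/
def ppow {K : Type} [NonUnitalRing K] (a : K) : ℕ → K
  | 0 => a
  | n + 1 => ppow a n * a

/-- Evaluation of an integer polynomial (whose constant term is ignored, hence
meaningful for polynomials with zero constant term) at an element of a non-unital ring. -/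
def evalnc {K : Type} [NonUnitalRing K] (p : Polynomial ℤ) (a : K) : K :=
  ∑ i ∈ Finset.range p.natDegree, p.coeff (i + 1) • ppow a i

open Polynomial Finset

namespace Aux17


variable {K : Type} [NonUnitalRing K]

def pval (a : K) (N : ℕ) (p : Polynomial ℤ) : K :=
  ∑ i ∈ Finset.range N, p.coeff (i + 1) • ppow a i

theorem pval_eq (a : K) (p : Polynomial ℤ) {N : ℕ} (h : p.natDegree ≤ N) :
    evalnc p a = pval a N p := by
  unfold evalnc pval
  apply Finset.sum_subset (Finset.range_subset_range.2 h)
  intro i _ hi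
  simp only [Finset.mem_range, not_lt] at hi
  rw [Polynomial.coeff_eq_zero_of_natDegree_lt (by omega), zero_smul]

theorem evalnc_add (a : K) (p q : Polynomial ℤ) :
    evalnc (p + q) a = evalnc p a + evalnc q a := by
  rw [pval_eq a (p+q) (le_trans (natDegree_add_le p q) (le_max_left _ _)),
    pval_eq a p (le_trans (le_max_left p.natDegree q.natDegree) (le_max_left _ _)),
    pval_eq a q (le_trans (le_max_right p.natDegree q.natDegree) (le_max_left _ (p.natDegree ⊔ q.natDegree)))]
  unfold pval
  rw [← Finset.sum_add_distrib]
  exact Finset.sum_congr rfl fun i _ => by rw [coeff_add, add_smul]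

theorem evalnc_smul (a : K) (c : ℤ) (p : Polynomial ℤ) :
    evalnc (c • p) a = c • evalnc p a := by
  rw [pval_eq a (c • p) (natDegree_smul_le c p), pval_eq a p (le_refl _)]
  unfold pval
  rw [Finset.smul_sum]
  exact Finset.sum_congr rfl fun i _ => by rw [coeff_smul, smul_assoc]

theorem evalnc_mul_X (a : K) {q : Polynomial ℤ} (h : q.coeff 0 = 0) :
    evalnc (q * X) a = evalnc q a * a := by
  rw [pval_eq a (q * X) (show (q*X).natDegree ≤ q.natDegree + 1 from le_trans (natDegree_mul_le) (by simp)),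
    pval_eq a q (le_refl _)]
  unfold pval
  rw [Finset.sum_range_succ']
  simp only [coeff_mul_X]
  rw [h, zero_smul, add_zero, Finset.sum_mul]
  exact Finset.sum_congr rfl fun i _ => by rw [smul_mul_assoc]; rfl

theorem evalnc_mul (a : K) {q : Polynomial ℤ} (h0 : q.coeff 0 = 0)
    (hq : evalnc q a = 0) (h : Polynomial ℤ) : evalnc (q * h) a = 0 := by
  induction h using Polynomial.induction_on with
  | C c => rw [mul_comm, ← smul_eq_C_mul, evalnc_smul, hq, smul_zero]
  | add r s hr hs => rw [mul_add, evalnc_add, hr, hs, add_zero]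
  | monomial n c hn =>
      have : q * (C c * X ^ (n + 1)) = q * (C c * X ^ n) * X := by ring
      rw [this, evalnc_mul_X a (by simp [h0]), hn, zero_mul]




variable (m : ℕ) (l' : ℕ → ℤ)

noncomputable def G : Polynomial ℤ := ∑ i ∈ Finset.range m, Polynomial.C (l' i) * Polynomial.X ^ (m - i)

theorem G_coeff_zero (hm : 0 < m) : (G m l').coeff 0 = 0 := by
  unfold G
  rw [finset_sum_coeff]
  apply Finset.sum_eq_zero
  intro i hi
  simp only [Finset.mem_range] at hi
  rw [coeff_C_mul, coeff_X_pow, if_neg (by omega), mul_zero]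

theorem G_coeff (k : ℕ) (h1 : 1 ≤ k) (h2 : k ≤ m) : (G m l').coeff k = l' (m - k) := by
  unfold G
  rw [finset_sum_coeff]
  rw [Finset.sum_eq_single (m - k)]
  · rw [coeff_C_mul, coeff_X_pow, if_pos (by omega), mul_one]
  · intro i hi hne
    simp only [Finset.mem_range] at hi
    rw [coeff_C_mul, coeff_X_pow, if_neg (by omega), mul_zero]
  · intro h; exact absurd (Finset.mem_range.2 (by omega)) h

theorem G_coeff_gt (k : ℕ) (h : m < k) : (G m l').coeff k = 0 := by
  unfold G
  rw [finset_sum_coeff]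
  apply Finset.sum_eq_zero
  intro i hi
  simp only [Finset.mem_range] at hi
  rw [coeff_C_mul, coeff_X_pow, if_neg (by omega), mul_zero]

/-- zero constant coefficient and all coefficients from index `m` on vanish -/
def Low (m : ℕ) (q : Polynomial ℤ) : Prop := q.coeff 0 = 0 ∧ ∀ i, m ≤ i → q.coeff i = 0

theorem Low_add {m} {q r : Polynomial ℤ} (hq : Low m q) (hr : Low m r) : Low m (q + r) :=
  ⟨by simp [hq.1, hr.1], fun i hi => by simp [hq.2 i hi, hr.2 i hi]⟩

theorem Low_smul {m} (c : ℤ) {q : Polynomial ℤ} (hq : Low m q) : Low m (c • q) :=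
  ⟨by simp [hq.1], fun i hi => by simp [hq.2 i hi]⟩

theorem Low_zero {m} : Low m (0 : Polynomial ℤ) := ⟨by simp, fun i _ => by simp⟩

variable (f : Polynomial ℤ) (d : ℤ)

def Pmem (q : Polynomial ℤ) : Prop :=
  ∃ u v w, Low m w ∧ q = G m l' * u + (Polynomial.C d * f) * v + w

theorem Pmem_add {q r : Polynomial ℤ} (hq : Pmem m l' f d q) (hr : Pmem m l' f d r) :
    Pmem m l' f d (q + r) := by
  obtain ⟨u, v, w, hw, rfl⟩ := hq
  obtain ⟨u', v', w', hw', rfl⟩ := hr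
  exact ⟨u + u', v + v', w + w', Low_add hw hw', by ring⟩

theorem Pmem_smul (c : ℤ) {q : Polynomial ℤ} (hq : Pmem m l' f d q) :
    Pmem m l' f d (c • q) := by
  obtain ⟨u, v, w, hw, rfl⟩ := hq
  refine ⟨C c * u, C c * v, c • w, Low_smul c hw, ?_⟩
  rw [smul_eq_C_mul, smul_eq_C_mul]; ring

theorem Pmem_G_mul (u : Polynomial ℤ) : Pmem m l' f d (G m l' * u) :=
  ⟨u, 0, 0, Low_zero, by ring⟩

theorem Pmem_df_mul (v : Polynomial ℤ) : Pmem m l' f d ((Polynomial.C d * f) * v) :=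
  ⟨0, v, 0, Low_zero, by ring⟩

theorem Pmem_low {w : Polynomial ℤ} (hw : Low m w) : Pmem m l' f d w :=
  ⟨0, 0, w, hw, by ring⟩

section Main
variable {m : ℕ} {l' : ℕ → ℤ} {f : Polynomial ℤ} {d : ℤ}
variable (hm : 0 < m)

theorem Gtop_coeff_zero (hm : 0 < m) : (G m l' - C (l' 0) * X ^ m).coeff 0 = 0 := by
  rw [coeff_sub, G_coeff_zero m l' hm, coeff_C_mul, coeff_X_pow, if_neg (by omega), mul_zero, sub_zero]

theorem Gtop_coeff_ge (hm : 0 < m) : ∀ j, m ≤ j → (G m l' - C (l' 0) * X ^ m).coeff j = 0 := by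
  intro j hj
  rcases eq_or_lt_of_le hj with h | h
  · rw [coeff_sub, ← h, G_coeff m l' m hm (le_refl m), Nat.sub_self, coeff_C_mul, coeff_X_pow,
      if_pos rfl, mul_one, sub_self]
  · rw [coeff_sub, G_coeff_gt m l' j h, coeff_C_mul, coeff_X_pow, if_neg (by omega), mul_zero, sub_zero]

theorem lemA (hm : 0 < m) : ∀ (k : ℕ) (q : Polynomial ℤ), q.coeff 0 = 0 →
    (∀ i, m + k ≤ i → q.coeff i = 0) → Pmem m l' f d ((l' 0 ^ k) • q) := by
  intro k
  induction k with
  | zero =>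
      intro q h0 hb
      rw [pow_zero, one_smul]
      exact Pmem_low m l' f d ⟨h0, fun i hi => hb i (by omega)⟩
  | succ k ih =>
      intro q h0 hb
      set c := q.coeff (m + k) with hc
      set r := l' 0 • (q - C c * X ^ (m + k)) - c • ((G m l' - C (l' 0) * X ^ m) * X ^ k) with hrdef
      have hid : (l' 0 ^ (k+1)) • q =
          l' 0 ^ k • (c • (G m l' * X ^ k)) + l' 0 ^ k • r := by
        rw [hrdef]
        simp only [smul_eq_C_mul, map_pow]
        ring
      rw [hid]
      apply Pmem_add
      · exact Pmem_smul m l' f d _ (Pmem_smul m l' f d _ (Pmem_G_mul m l' f d _))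
      · apply ih r
        · rw [hrdef]
          simp only [coeff_sub, coeff_smul, Polynomial.mul_coeff_zero, coeff_C_mul, coeff_X_pow,
            Gtop_coeff_zero hm, h0, coeff_X_pow]
          rw [if_neg (by omega)]
          simp
        · intro i hi
          rw [hrdef]
          have h1 : (q - C c * X ^ (m + k)).coeff i = 0 := by
            rcases eq_or_lt_of_le hi with h | h
            · rw [coeff_sub, ← h, coeff_C_mul, coeff_X_pow, if_pos rfl, mul_one, hc, sub_self]
            · rw [coeff_sub, hb i (by omega), coeff_C_mul, coeff_X_pow, if_neg (by omega),
                mul_zero, sub_zero]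
          have h2 : ((G m l' - C (l' 0) * X ^ m) * X ^ k).coeff i = 0 := by
            have : i = (i - k) + k := by omega
            rw [this, coeff_mul_X_pow]
            exact Gtop_coeff_ge hm (i - k) (by omega)
          rw [coeff_sub, coeff_smul, h1, coeff_smul, h2, smul_zero, smul_zero, sub_self]
          
theorem lemD (hfm : f.Monic) (hfc : f.coeff 0 = 0) {M : ℕ} (hMn : f.natDegree ≤ M)
    (hn : 1 ≤ f.natDegree) :
    ∀ (k : ℕ) (q : Polynomial ℤ), q.coeff 0 = 0 → (∀ i, M + k ≤ i → q.coeff i = 0) →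
    ∃ r, Low M r ∧ ∃ v, C d * (q - r) = (C d * f) * v := by
  set n := f.natDegree with hndef
  intro k
  induction k with
  | zero =>
      intro q h0 hb
      exact ⟨q, ⟨h0, fun i hi => hb i (by omega)⟩, 0, by ring_nf⟩
  | succ k ih =>
      intro q h0 hb
      set c := q.coeff (M + k) with hc
      set inner := (q - C c * X ^ (M + k)) - c • ((f - X ^ n) * X ^ (M + k - n)) with hidef
      have hinner0 : inner.coeff 0 = 0 := by
        have e1 : (f - X ^ n).coeff 0 = 0 := by
          rw [coeff_sub, hfc, coeff_X_pow, if_neg (by omega), sub_zero]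
        have e2 : ((f - X ^ n) * X ^ (M + k - n)).coeff 0 = 0 := by
          rw [Polynomial.mul_coeff_zero, e1, zero_mul]
        rw [hidef, coeff_sub, coeff_sub, h0, coeff_smul, e2, smul_zero, coeff_C_mul,
          coeff_X_pow, if_neg (by omega), mul_zero]
        simp
      have hinnerb : ∀ i, M + k ≤ i → inner.coeff i = 0 := by
        intro i hi
        rw [hidef]
        have h1 : (q - C c * X ^ (M + k)).coeff i = 0 := by
          rcases eq_or_lt_of_le hi with h | h
          · rw [coeff_sub, ← h, coeff_C_mul, coeff_X_pow, if_pos rfl, mul_one, hc, sub_self]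
          · rw [coeff_sub, hb i (by omega), coeff_C_mul, coeff_X_pow, if_neg (by omega),
              mul_zero, sub_zero]
        have h2 : ((f - X ^ n) * X ^ (M + k - n)).coeff i = 0 := by
          have heq : i = (i - (M + k - n)) + (M + k - n) := by omega
          rw [heq, coeff_mul_X_pow]
          have hjn : n ≤ i - (M + k - n) := by omega
          rcases eq_or_lt_of_le hjn with h | h
          · rw [coeff_sub, ← h, coeff_X_pow, if_pos rfl, hndef]
            rw [show f.coeff f.natDegree = 1 from hfm.coeff_natDegree, sub_self]
          · rw [coeff_sub, Polynomial.coeff_eq_zero_of_natDegree_lt (by omega), coeff_X_pow,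
              if_neg (by omega), sub_zero]
        rw [coeff_sub, h1, coeff_smul, h2, smul_zero, sub_zero]
      obtain ⟨r, hrLow, v', hv'⟩ := ih inner hinner0 hinnerb
      refine ⟨r, hrLow, C c * X ^ (M + k - n) + v', ?_⟩
      have hq_inner : q - inner = C c * (X ^ (M + k - n) * f) := by
        rw [hidef]
        have hpow : (X : Polynomial ℤ) ^ (M + k - n) * X ^ n = X ^ (M + k) := by
          rw [← pow_add]
          congr 1
          omega
        simp only [smul_eq_C_mul]
        linear_combination (-(C c : Polynomial ℤ)) * hpow
      linear_combination hv' + C d * hq_inner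

theorem fact1 (hm : 0 < m) (hfm : f.Monic) (hfc : f.coeff 0 = 0) {M : ℕ}
    (hMn : f.natDegree ≤ M) (hMm : m ≤ M) (hn : 1 ≤ f.natDegree) :
    ∀ q : Polynomial ℤ, q.coeff 0 = 0 → Pmem m l' f d ((d * l' 0 ^ (M - m)) • q) := by
  intro q h0
  obtain ⟨r, hrLow, v, hv⟩ := lemD hfm hfc hMn hn (q.natDegree + 1) q h0
    (fun i hi => Polynomial.coeff_eq_zero_of_natDegree_lt (by omega))
  have hid : (d * l' 0 ^ (M - m)) • q =
      l' 0 ^ (M - m) • (C d * (q - r)) + l' 0 ^ (M - m) • (d • r) := by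
    simp only [smul_eq_C_mul, map_pow, map_mul]; ring
  rw [hid]
  apply Pmem_add
  · rw [hv]; exact Pmem_smul _ _ _ _ _ (Pmem_df_mul _ _ _ _ v)
  · apply lemA hm (M - m) (d • r)
    · rw [coeff_smul, hrLow.1, smul_zero]
    · intro i hi
      rw [coeff_smul, hrLow.2 i (by omega), smul_zero]

theorem partW (hm : 0 < m) (hl0 : 0 < l' 0) (hd : 1 < d) (hfm : f.Monic) (hfc : f.coeff 0 = 0)
    {M : ℕ} (hMn : f.natDegree ≤ M) (hMm : m ≤ M) (hn : 1 ≤ f.natDegree)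
    (p : ℕ) (hp : p.Prime) (hcont : ∃ j, j < m ∧ ¬ (p:ℤ) ∣ l' j) :
    ∃ e : ℤ, ¬ (p:ℤ) ∣ e ∧ Pmem m l' f d (e • (X : Polynomial ℤ) ^ m) := by
  classical
  set D₀ : ℤ := d * l' 0 ^ (M - m) with hD₀def
  have hD₀pos : 0 < D₀ := mul_pos (by omega) (pow_pos hl0 _)
  set T : ℕ := (D₀.natAbs).factorization p with hTdef
  set en : ℕ := D₀.natAbs / p ^ T with hendef
  have hD₀n : p ^ T * en = D₀.natAbs := Nat.ordProj_mul_ordCompl_eq_self D₀.natAbs p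
  have hpen : ¬ p ∣ en := Nat.not_dvd_ordCompl hp (by
    simp only [ne_eq, Int.natAbs_eq_zero]; omega)
  have hD₀ : D₀ = (p:ℤ) ^ T * (en : ℤ) := by
    have h := congrArg (fun x : ℕ => (x : ℤ)) hD₀n
    push_cast at h
    rw [h]
    exact (abs_of_pos hD₀pos).symm
  -- selection of μ
  set Bs := (Finset.range (m+1)).filter (fun i => ¬ (p:ℤ) ∣ (G m l').coeff i) with hBdef
  have hBne : Bs.Nonempty := by
    obtain ⟨j, hj, hjd⟩ := hcont
    refine ⟨m - j, Finset.mem_filter.2 ⟨Finset.mem_range.2 (by omega), ?_⟩⟩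
    rw [G_coeff m l' (m - j) (by omega) (by omega), show m - (m - j) = j from by omega]
    exact hjd
  set μ : ℕ := Bs.max' hBne with hμdef
  have hμmem : μ ∈ Bs := by rw [hμdef]; exact Finset.max'_mem Bs hBne
  rw [hBdef, Finset.mem_filter, Finset.mem_range] at hμmem
  have hμm : μ ≤ m := by omega
  have hμd : ¬ (p:ℤ) ∣ (G m l').coeff μ := hμmem.2
  have hμpos : 0 < μ := by
    rcases Nat.eq_zero_or_pos μ with h | h
    · exfalso; apply hμd; rw [h, G_coeff_zero m l' hm]; exact dvd_zero _
    · exact h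
  have hhigh : ∀ i, μ < i → (p:ℤ) ∣ (G m l').coeff i := by
    intro i hi
    by_cases him : i ≤ m
    · by_contra hnd
      have hmem : i ∈ Bs := by
        rw [hBdef, Finset.mem_filter, Finset.mem_range]; exact ⟨by omega, hnd⟩
      have := Finset.le_max' Bs i hmem
      omega
    · rw [G_coeff_gt m l' i (by omega)]; exact dvd_zero _
  -- decompose G at X^μ
  set b := G m l' %ₘ (X ^ μ) with hbdef
  set h₀ := G m l' /ₘ (X ^ μ) with hh0def
  have hmonX : ((X : Polynomial ℤ) ^ μ).Monic := monic_X_pow μ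
  have hdecomp : G m l' = b + X ^ μ * h₀ := (modByMonic_add_div (G m l') (X ^ μ)).symm
  have hbcoeff : ∀ i, μ ≤ i → b.coeff i = 0 := by
    intro i hi
    apply coeff_eq_zero_of_degree_lt
    refine lt_of_lt_of_le (degree_modByMonic_lt _ hmonX) ?_
    rw [degree_X_pow]
    exact_mod_cast hi
  have hb0 : b.coeff 0 = 0 := by
    have h := congrArg (fun q => Polynomial.coeff q 0) hdecomp
    simp only [coeff_add, Polynomial.mul_coeff_zero, coeff_X_pow] at h
    rw [G_coeff_zero m l' hm, if_neg (by omega), zero_mul, add_zero] at h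
    exact h.symm
  have hh₀coeff : ∀ j, h₀.coeff j = (G m l').coeff (μ + j) := by
    intro j
    have h := congrArg (fun q => Polynomial.coeff q (j + μ)) hdecomp
    simp only [coeff_add] at h
    rw [coeff_X_pow_mul, hbcoeff (j + μ) (by omega), zero_add] at h
    rw [show μ + j = j + μ from by omega, h]
  have hc₀d : ¬ (p:ℤ) ∣ h₀.coeff 0 := by
    rw [hh₀coeff 0, Nat.add_zero]; exact hμd
  obtain ⟨t', ht'⟩ : C (p:ℤ) ∣ h₀.divX := by
    refine (C_dvd_iff_dvd_coeff _ _).2 (fun i => ?_)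
    rw [coeff_divX, hh₀coeff (i + 1)]
    exact hhigh _ (by omega)
  have hh₀eq : h₀ = C (h₀.coeff 0) + X * (C (p:ℤ) * t') := by
    rw [← ht']
    linear_combination (X_mul_divX_add h₀).symm
  -- pass to ZMod (p ^ T)
  have hpT0 : ((p : ZMod (p ^ T))) ^ T = 0 := by
    have h : ((p ^ T : ℕ) : ZMod (p ^ T)) = 0 := ZMod.natCast_self _
    push_cast at h
    exact h
  set gS := (G m l').map (Int.castRingHom (ZMod (p ^ T))) with hgSdef
  set bS := b.map (Int.castRingHom (ZMod (p ^ T))) with hbSdef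
  set W := h₀.map (Int.castRingHom (ZMod (p ^ T))) with hWdef
  set tS := t'.map (Int.castRingHom (ZMod (p ^ T))) with htSdef
  have hF1 : gS = bS + X ^ μ * W := by
    rw [hgSdef, hdecomp, Polynomial.map_add, Polynomial.map_mul, Polynomial.map_pow,
      Polynomial.map_X, ← hbSdef, ← hWdef]
  set c₀ : ZMod (p ^ T) := ((h₀.coeff 0 : ℤ) : ZMod (p ^ T)) with hc₀def
  have hWeq : W = C c₀ + C (p : ZMod (p ^ T)) * (X * tS) := by
    rw [hWdef]
    conv_lhs => rw [hh₀eq]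
    rw [Polynomial.map_add, Polynomial.map_mul, Polynomial.map_mul, Polynomial.map_C,
      Polynomial.map_C, Polynomial.map_X, ← htSdef]
    simp only [Int.coe_castRingHom, Int.cast_natCast, hc₀def]
    ring
  have hcop : IsCoprime ((p:ℤ) ^ T) (h₀.coeff 0) :=
    ((Nat.prime_iff_prime_int.1 hp).coprime_iff_not_dvd.2 hc₀d).pow_left
  obtain ⟨α, β, hαβ⟩ := hcop
  set c₀inv : ZMod (p ^ T) := ((β : ℤ) : ZMod (p ^ T)) with hc₀invdef
  have hc₀inv : c₀ * c₀inv = 1 := by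
    have h := congrArg (fun z : ℤ => (z : ZMod (p ^ T))) hαβ
    push_cast at h
    rw [hpT0, mul_zero, zero_add] at h
    rw [hc₀def, hc₀invdef, mul_comm]
    exact h
  have hnil : IsNilpotent (C (p : ZMod (p ^ T)) * (X * tS)) :=
    ⟨T, by rw [mul_pow, ← map_pow, hpT0, map_zero, zero_mul]⟩
  have hCc₀ : IsUnit (C c₀ : Polynomial (ZMod (p ^ T))) :=
    Polynomial.isUnit_C.2 (IsUnit.of_mul_eq_one _ hc₀inv)
  have hWunit : IsUnit W := by
    rw [hWeq, add_comm]
    exact hnil.isUnit_add_right_of_commute hCc₀ (Commute.all _ _)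
  set iW : Polynomial (ZMod (p ^ T)) := ↑(hWunit.unit⁻¹) with hiWdef
  have hWiW : W * iW = 1 := by
    rw [hiWdef]
    nth_rewrite 1 [← hWunit.unit_spec]
    exact_mod_cast hWunit.unit.mul_inv
  have hCC : (C c₀ : Polynomial (ZMod (p ^ T))) * C c₀inv = 1 := by
    rw [← map_mul, hc₀inv, map_one]
  have h3 : iW = C c₀inv - C c₀inv * (C (p : ZMod (p ^ T)) * (X * tS)) * iW := by
    linear_combination (-(C c₀inv * iW)) * hWeq + C c₀inv * hWiW - iW * hCC
  -- the inductive divisibility claim in (ZMod (p^T))[X]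
  set Rcond : ℕ → Polynomial (ZMod (p ^ T)) → Prop := fun t q =>
    ∃ h lam w, (lam.coeff 0 = 0 ∧ ∀ i, μ ≤ i → lam.coeff i = 0) ∧ w.coeff 0 = 0 ∧
      q = gS * h + lam + (C (p : ZMod (p ^ T))) ^ t * w with hRdef
  have Rzero : ∀ t, Rcond t 0 :=
    fun t => ⟨0, 0, 0, ⟨by simp, fun i _ => by simp⟩, by simp, by ring⟩
  have Radd : ∀ {t q r}, Rcond t q → Rcond t r → Rcond t (q + r) := by
    rintro t q r ⟨h, lam, w, ⟨hl1, hl2⟩, hw0, rfl⟩ ⟨h', lam', w', ⟨hl1', hl2'⟩, hw0', rfl⟩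
    exact ⟨h + h', lam + lam', w + w',
      ⟨by simp [hl1, hl1'], fun i hi => by simp [hl2 i hi, hl2' i hi]⟩,
      by simp [hw0, hw0'], by ring⟩
  have Rcmul : ∀ {t q} (c : ZMod (p ^ T)), Rcond t q → Rcond t (C c * q) := by
    rintro t q c ⟨h, lam, w, ⟨hl1, hl2⟩, hw0, rfl⟩
    exact ⟨C c * h, C c * lam, C c * w,
      ⟨by simp [hl1], fun i hi => by simp [coeff_C_mul, hl2 i hi]⟩,
      by simp [hw0], by ring⟩
  have Rlow : ∀ (t N : ℕ), (∀ j, 1 ≤ j → j < N → Rcond t ((X : Polynomial (ZMod (p ^ T))) ^ j)) →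
      ∀ q : Polynomial (ZMod (p ^ T)), q.coeff 0 = 0 → (∀ i, N ≤ i → q.coeff i = 0) →
      Rcond t q := by
    intro t N hX q h0 hbnd
    by_cases hq0 : q = 0
    · rw [hq0]; exact Rzero t
    have hdeg : q.natDegree < N := by
      by_contra hcon
      push_neg at hcon
      exact hq0 (Polynomial.leadingCoeff_eq_zero.1 (hbnd _ hcon))
    rw [Polynomial.as_sum_range' q N hdeg]
    apply Finset.sum_induction _ (Rcond t) (fun _ _ ha hb => Radd ha hb) (Rzero t)
    intro i hi
    rcases Nat.eq_zero_or_pos i with rfl | hipos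
    · rw [h0, Polynomial.monomial_zero_right]; exact Rzero t
    · rw [← Polynomial.smul_X_eq_monomial, smul_eq_C_mul]
      exact Rcmul _ (hX i hipos (Finset.mem_range.1 hi))
  have claimR : ∀ (t N : ℕ), 1 ≤ N → Rcond t ((X : Polynomial (ZMod (p ^ T))) ^ N) := by
    intro t
    induction t with
    | zero =>
        intro N hN
        exact ⟨0, 0, X ^ N, ⟨by simp, fun i _ => by simp⟩,
          by rw [coeff_X_pow, if_neg (by omega)], by ring⟩
    | succ t iht =>
        have ihall : ∀ q : Polynomial (ZMod (p ^ T)), q.coeff 0 = 0 → Rcond t q := by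
          intro q h0
          exact Rlow t (q.natDegree + 1) (fun j hj1 _ => iht j hj1) q h0
            (fun i hi => Polynomial.coeff_eq_zero_of_natDegree_lt (by omega))
        intro N
        induction N using Nat.strong_induction_on with
        | _ N ihN =>
          intro hN
          by_cases hNμ : N < μ
          · exact ⟨0, X ^ N, 0,
              ⟨by rw [coeff_X_pow, if_neg (by omega)],
               fun i hi => by rw [coeff_X_pow, if_neg (by omega)]⟩, by simp, by ring⟩
          · push_neg at hNμ
            have hNsub : N - μ + μ = N := Nat.sub_add_cancel hNμ
            have hxx : (X : Polynomial (ZMod (p ^ T))) ^ (N - μ) * X ^ μ = X ^ N := by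
              rw [← pow_add, hNsub]
            have h1 : (X : Polynomial (ZMod (p ^ T))) ^ (N - μ) * gS
                = X ^ (N - μ) * bS + X ^ N * W := by
              rw [hF1, ← hxx]; ring
            have h2 : (X : Polynomial (ZMod (p ^ T))) ^ N
                = gS * (X ^ (N - μ) * iW) - (X ^ (N - μ) * bS) * iW := by
              linear_combination (- iW) * h1 - (X : Polynomial (ZMod (p ^ T))) ^ N * hWiW
            have key : (X : Polynomial (ZMod (p ^ T))) ^ N = gS * (X ^ (N - μ) * iW)
                + C (- c₀inv) * (X ^ (N - μ) * bS)
                + C (p : ZMod (p ^ T)) * (C c₀inv * ((X * tS) * iW * (X ^ (N - μ) * bS))) := by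
              rw [map_neg]
              linear_combination h2 - (X ^ (N - μ) * bS) * h3
            have hbS0 : bS.coeff 0 = 0 := by
              rw [hbSdef, Polynomial.coeff_map, hb0, map_zero]
            have hbSb : ∀ i, μ ≤ i → bS.coeff i = 0 := fun i hi => by
              rw [hbSdef, Polynomial.coeff_map, hbcoeff i hi, map_zero]
            have hs0 : ((X : Polynomial (ZMod (p ^ T))) ^ (N - μ) * bS).coeff 0 = 0 := by
              rw [Polynomial.mul_coeff_zero, hbS0, mul_zero]
            have hsb : ∀ i, N ≤ i → ((X : Polynomial (ZMod (p ^ T))) ^ (N - μ) * bS).coeff i = 0 := by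
              intro i hi
              rw [show i = (i - (N - μ)) + (N - μ) from by omega, coeff_X_pow_mul]
              exact hbSb _ (by omega)
            have hterm2 : Rcond (t + 1) (X ^ (N - μ) * bS) :=
              Rlow (t + 1) N (fun j hj1 hj2 => ihN j hj2 hj1) _ hs0 hsb
            have hterm3 : Rcond (t + 1)
                (C (p : ZMod (p ^ T)) * (C c₀inv * ((X * tS) * iW * (X ^ (N - μ) * bS)))) := by
              have hs'0 : (C c₀inv * ((X * tS) * iW * (X ^ (N - μ) * bS))).coeff 0 = 0 := by
                rw [coeff_C_mul, Polynomial.mul_coeff_zero, hs0, mul_zero, mul_zero]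
              obtain ⟨h, lam, w, ⟨hl1, hl2⟩, hw0, heq⟩ := ihall _ hs'0
              exact ⟨C (p : ZMod (p ^ T)) * h, C (p : ZMod (p ^ T)) * lam, w,
                ⟨by simp [hl1], fun i hi => by simp [coeff_C_mul, hl2 i hi]⟩, hw0,
                by rw [heq]; ring⟩
            rw [key]
            exact Radd (Radd ⟨X ^ (N - μ) * iW, 0, 0, ⟨by simp, fun i _ => by simp⟩,
              by simp, by ring⟩ (Rcmul _ hterm2)) hterm3
  -- conclude in ZMod (p^T)[X] and lift
  obtain ⟨hS, lam, w, ⟨hlam0, hlamb⟩, hwc0, heqS⟩ := claimR T m hm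
  have hCpT : (C (p : ZMod (p ^ T))) ^ T = (0 : Polynomial (ZMod (p ^ T))) := by
    rw [← map_pow, hpT0, map_zero]
  rw [hCpT, zero_mul, add_zero] at heqS
  obtain ⟨h, rfl⟩ : ∃ h : Polynomial ℤ, h.map (Int.castRingHom (ZMod (p ^ T))) = hS :=
    (Polynomial.map_surjective _ ZMod.intCast_surjective) hS
  set w' : Polynomial ℤ := X ^ m - G m l' * h with hw'def
  have hw'S : w'.map (Int.castRingHom (ZMod (p ^ T))) = lam := by
    rw [hw'def, Polynomial.map_sub, Polynomial.map_pow, Polynomial.map_mul, Polynomial.map_X,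
      ← hgSdef]
    linear_combination heqS
  set lamZ := w' %ₘ (X ^ m) with hlamZdef
  set u := w' /ₘ (X ^ m) with hudef
  have hmonXm : ((X : Polynomial ℤ) ^ m).Monic := monic_X_pow m
  have hsplit : w' = lamZ + X ^ m * u := (modByMonic_add_div w' (X ^ m)).symm
  have hlamZb : ∀ i, m ≤ i → lamZ.coeff i = 0 := by
    intro i hi
    apply coeff_eq_zero_of_degree_lt
    refine lt_of_lt_of_le (degree_modByMonic_lt _ hmonXm) ?_
    rw [degree_X_pow]
    exact_mod_cast hi
  have hw'0 : w'.coeff 0 = 0 := by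
    rw [hw'def, coeff_sub, coeff_X_pow, if_neg (by omega), Polynomial.mul_coeff_zero,
      G_coeff_zero m l' hm, zero_mul, sub_zero]
  have hlamZ0 : lamZ.coeff 0 = 0 := by
    have hcoe := congrArg (fun q => Polynomial.coeff q 0) hsplit
    simp only [coeff_add, Polynomial.mul_coeff_zero, coeff_X_pow] at hcoe
    rw [hw'0, if_neg (by omega), zero_mul, add_zero] at hcoe
    exact hcoe.symm
  have hdvdrest : ∀ i, (p:ℤ) ^ T ∣ ((X : Polynomial ℤ) ^ m * u).coeff i := by
    intro i
    by_cases him : i < m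
    · rw [X_pow_mul, Polynomial.coeff_mul_X_pow', if_neg (by omega)]
      exact dvd_zero _
    · push_neg at him
      have h1 : ((X : Polynomial ℤ) ^ m * u).coeff i = w'.coeff i := by
        rw [hsplit, coeff_add, hlamZb i him, zero_add]
      rw [h1]
      have h2 : ((w'.coeff i : ℤ) : ZMod (p ^ T)) = 0 := by
        have hcoe := congrArg (fun q => Polynomial.coeff q i) hw'S
        simp only [Polynomial.coeff_map, Int.coe_castRingHom] at hcoe
        rw [hlamb i (le_trans hμm him)] at hcoe
        exact hcoe
      rw [ZMod.intCast_zmod_eq_zero_iff_dvd] at h2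
      push_cast at h2
      exact h2
  obtain ⟨w0, hw0eq⟩ := (C_dvd_iff_dvd_coeff ((p:ℤ) ^ T) ((X : Polynomial ℤ) ^ m * u)).2 hdvdrest
  have hw00 : w0.coeff 0 = 0 := by
    have hcoe := congrArg (fun q => Polynomial.coeff q 0) hw0eq
    simp only [coeff_C_mul] at hcoe
    rw [X_pow_mul, Polynomial.coeff_mul_X_pow', if_neg (by omega)] at hcoe
    have hpne : ((p:ℤ)) ^ T ≠ 0 := pow_ne_zero _ (by exact_mod_cast hp.ne_zero)
    exact (mul_eq_zero.mp hcoe.symm).resolve_left hpne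
  refine ⟨(en : ℤ), fun hdvd => hpen (Int.ofNat_dvd.mp hdvd), ?_⟩
  have hXm : (X : Polynomial ℤ) ^ m = G m l' * h + lamZ + C ((p:ℤ) ^ T) * w0 := by
    rw [← hw0eq]
    linear_combination hsplit - hw'def
  have hid : (en : ℤ) • ((X : Polynomial ℤ) ^ m) =
      G m l' * (C (en : ℤ) * h) + (en : ℤ) • lamZ + D₀ • w0 := by
    rw [hXm, hD₀]
    simp only [smul_eq_C_mul, map_mul, map_pow]
    ring
  rw [hid]
  refine Pmem_add m l' f d (Pmem_add m l' f d ?_ ?_) ?_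
  · exact Pmem_G_mul m l' f d _
  · exact Pmem_low m l' f d (Low_smul _ ⟨hlamZ0, hlamZb⟩)
  · rw [hD₀def]
    exact fact1 hm hfm hfc hMn hMm hn w0 hw00


end Main


end Aux17

/-- If `a` satisfies a relation with coprime coefficients of degree `m` and also
`d • f(a) = 0` for a monic polynomial `f` and `d > 1`, then `a` satisfies a monic
relation of degree at most `m`. -/
theorem stmt17 (K : Type) [NonUnitalRing K] (a : K) (m : ℕ) (hm : 0 < m)
    (l : Fin m → ℤ) (hl0 : 0 < l ⟨0, hm⟩)
    (hgcd : Finset.univ.gcd l = 1)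
    (hrel : ∑ i : Fin m, l i • ppow a (m - 1 - (i : ℕ)) = 0)
    (f : Polynomial ℤ) (d : ℤ) (hd : 1 < d) (hfm : f.Monic) (hfc : f.coeff 0 = 0)
    (hdf : d • evalnc f a = 0) :
    ∃ φ : Polynomial ℤ, φ.Monic ∧ φ.coeff 0 = 0 ∧ φ.natDegree ≤ m ∧ evalnc φ a = 0 := by
  classical
  set l' : ℕ → ℤ := fun i => if h : i < m then l ⟨i, h⟩ else 0 with hl'def
  have hl0' : 0 < l' 0 := by rw [hl'def]; simpa [hm] using hl0
  have hG0 : (Aux17.G m l').coeff 0 = 0 := Aux17.G_coeff_zero m l' hm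
  have hGnat : (Aux17.G m l').natDegree ≤ m :=
    Polynomial.natDegree_le_iff_coeff_eq_zero.2 (fun N hN => Aux17.G_coeff_gt m l' N hN)
  have hGa : evalnc (Aux17.G m l') a = 0 := by
    rw [Aux17.pval_eq a _ hGnat]
    unfold Aux17.pval
    have hstep : ∀ k ∈ Finset.range m, (Aux17.G m l').coeff (k + 1) • ppow a k
        = (fun j => l' j • ppow a (m - 1 - j)) (m - 1 - k) := by
      intro k hk
      rw [Finset.mem_range] at hk
      rw [Aux17.G_coeff m l' (k + 1) (by omega) (by omega)]
      have e1 : m - (k + 1) = m - 1 - k := by omega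
      have e2 : m - 1 - (m - 1 - k) = k := by omega
      simp only [e1, e2]
    rw [Finset.sum_congr rfl hstep, Finset.sum_range_reflect (fun j => l' j • ppow a (m - 1 - j)) m]
    have e3 : ∑ j ∈ Finset.range m, l' j • ppow a (m - 1 - j)
        = ∑ i : Fin m, l i • ppow a (m - 1 - (i : ℕ)) := by
      rw [← Fin.sum_univ_eq_sum_range (fun j => l' j • ppow a (m - 1 - j)) m]
      apply Finset.sum_congr rfl
      intro i _
      rw [hl'def]
      simp [i.isLt]
    rw [e3]
    exact hrel
  have hdfa : evalnc (Polynomial.C d * f) a = 0 := by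
    rw [← smul_eq_C_mul, Aux17.evalnc_smul, hdf]
  have hdf0 : (Polynomial.C d * f).coeff 0 = 0 := by
    rw [Polynomial.mul_coeff_zero, hfc, mul_zero]
  have hn : 1 ≤ f.natDegree := by
    by_contra hcon
    push_neg at hcon
    have h0 : f.natDegree = 0 := by omega
    have := Polynomial.eq_C_of_natDegree_eq_zero h0
    rw [hfc, map_zero] at this
    exact hfm.ne_zero this
  have hcont : ∀ pp : ℕ, pp.Prime → ∃ j, j < m ∧ ¬ (pp : ℤ) ∣ l' j := by
    intro pp hpp
    by_contra hc
    push_neg at hc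
    have hdg : (pp : ℤ) ∣ Finset.univ.gcd l := by
      apply Finset.dvd_gcd
      intro i _
      have := hc i.1 i.isLt
      rw [hl'def] at this
      simpa [i.isLt] using this
    rw [hgcd] at hdg
    have h1 := Int.le_of_dvd one_pos hdg
    have h2 : (2 : ℤ) ≤ (pp : ℤ) := by exact_mod_cast hpp.two_le
    omega
  have hEadd : ∀ {x y : ℤ}, Aux17.Pmem m l' f d (x • (Polynomial.X : Polynomial ℤ) ^ m) →
      Aux17.Pmem m l' f d (y • (Polynomial.X : Polynomial ℤ) ^ m) →
      Aux17.Pmem m l' f d ((x + y) • (Polynomial.X : Polynomial ℤ) ^ m) := by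
    intro x y hx hy
    rw [add_smul]
    exact Aux17.Pmem_add m l' f d hx hy
  set E : Ideal ℤ :=
    { carrier := {e : ℤ | Aux17.Pmem m l' f d (e • (Polynomial.X : Polynomial ℤ) ^ m)}
      add_mem' := fun hx hy => hEadd hx hy
      zero_mem' := by
        simp only [Set.mem_setOf_eq, zero_smul]
        exact Aux17.Pmem_low m l' f d Aux17.Low_zero
      smul_mem' := fun c x hx => by
        simp only [Set.mem_setOf_eq, smul_eq_mul] at *
        rw [mul_smul]
        exact Aux17.Pmem_smul m l' f d c hx } with hEdef
  have hEp : ∀ pp : ℕ, pp.Prime → ∃ e : ℤ, ¬ (pp : ℤ) ∣ e ∧ e ∈ E := by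
    intro pp hpp
    obtain ⟨e, he1, he2⟩ := Aux17.partW hm hl0' hd hfm hfc
      (le_max_left f.natDegree m) (le_max_right f.natDegree m) hn pp hpp (hcont pp hpp)
    exact ⟨e, he1, he2⟩
  obtain ⟨n₀, hn₀⟩ := (IsPrincipalIdealRing.principal E).principal
  have hmemE : ∀ x : ℤ, x ∈ E ↔ n₀ ∣ x := by
    intro x
    rw [hn₀]
    exact Ideal.mem_span_singleton
  have hunit : IsUnit n₀ := by
    by_contra hnu
    obtain ⟨e2, he2d, he2m⟩ := hEp 2 Nat.prime_two
    have hd2 : n₀ ∣ e2 := (hmemE e2).1 he2m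
    have hn₀0 : n₀ ≠ 0 := by
      rintro rfl
      rw [zero_dvd_iff] at hd2
      exact he2d (hd2 ▸ dvd_zero _)
    have h1 : n₀.natAbs ≠ 1 := fun h => hnu (Int.isUnit_iff_natAbs_eq.2 h)
    obtain ⟨q, hq, hqd⟩ := Nat.exists_prime_and_dvd h1
    obtain ⟨eq, heqd, heqm⟩ := hEp q hq
    apply heqd
    have hq1 : (q : ℤ) ∣ (n₀.natAbs : ℤ) := Int.ofNat_dvd.2 hqd
    have hq2 : (n₀.natAbs : ℤ) ∣ n₀ := Int.natAbs_dvd.2 dvd_rfl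
    exact dvd_trans (dvd_trans hq1 hq2) ((hmemE eq).1 heqm)
  have h1E : (1 : ℤ) ∈ E := (hmemE 1).2 (isUnit_iff_dvd_one.1 hunit)
  have hXmP : Aux17.Pmem m l' f d ((Polynomial.X : Polynomial ℤ) ^ m) := by
    have : Aux17.Pmem m l' f d ((1 : ℤ) • (Polynomial.X : Polynomial ℤ) ^ m) := h1E
    rwa [one_smul] at this
  obtain ⟨u, v, w, hwLow, hXmeq⟩ := hXmP
  refine ⟨Polynomial.X ^ m - w, ?_, ?_, ?_, ?_⟩
  · have hcoeffs : ∀ i, m < i → (Polynomial.X ^ m - w : Polynomial ℤ).coeff i = 0 := by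
      intro i hi
      rw [Polynomial.coeff_sub, Polynomial.coeff_X_pow, if_neg (by omega),
        hwLow.2 i (by omega), sub_zero]
    have hcm : (Polynomial.X ^ m - w : Polynomial ℤ).coeff m = 1 := by
      rw [Polynomial.coeff_sub, Polynomial.coeff_X_pow, if_pos rfl,
        hwLow.2 m (le_refl m), sub_zero]
    have hnd : (Polynomial.X ^ m - w : Polynomial ℤ).natDegree = m :=
      le_antisymm (Polynomial.natDegree_le_iff_coeff_eq_zero.2 hcoeffs)
        (Polynomial.le_natDegree_of_ne_zero (by rw [hcm]; exact one_ne_zero))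
    show (Polynomial.X ^ m - w : Polynomial ℤ).leadingCoeff = 1
    rw [Polynomial.leadingCoeff, hnd, hcm]
  · rw [Polynomial.coeff_sub, hwLow.1, sub_zero, Polynomial.coeff_X_pow, if_neg (by omega)]
  · have hcoeffs : ∀ i, m < i → (Polynomial.X ^ m - w : Polynomial ℤ).coeff i = 0 := by
      intro i hi
      rw [Polynomial.coeff_sub, Polynomial.coeff_X_pow, if_neg (by omega),
        hwLow.2 i (by omega), sub_zero]
    exact Polynomial.natDegree_le_iff_coeff_eq_zero.2 hcoeffs
  · have hsplit : (Polynomial.X : Polynomial ℤ) ^ m - w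
        = Aux17.G m l' * u + (Polynomial.C d * f) * v := by
      rw [hXmeq]; ring
    rw [hsplit, Aux17.evalnc_add, Aux17.evalnc_mul a hG0 hGa u, Aux17.evalnc_mul a hdf0 hdfa v,
      add_zero]
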